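/- Let F be a Borel probability measure on [0,1] whose moments m_j(F) = ∫₀¹ x^j dF(x) satisfy ∑_{j=1}^∞ m_j(F) < ∞, and let n ≥ 1. Then ∑_{k=1}^n (n choose k) (−1)^{k−1} ζ_F(k) = ∑_{j=1}^∞ [1 − (1 − m_j(F))^n], where ζ_F(k) = ∑_{j=1}^∞ m_j(F)^k and both series converge absolutely. -/

import Mathlib

open MeasureTheory

lemma binom_id_aux (x : ℝ) (n : ℕ) :
    ∑ k ∈ Finset.Icc 1 n, (n.choose k : ℝ) * (-1 : ℝ) ^ (k - 1) * x ^ k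
      = 1 - (1 - x) ^ n := by
  have key : ∑ k ∈ Finset.range (n + 1), (-x) ^ k * (n.choose k : ℝ) = (1 - x) ^ n := by
    have h := add_pow (-x) (1 : ℝ) n
    simp only [one_pow, mul_one, neg_add_eq_sub] at h
    exact h.symm
  have hsplit : ∑ k ∈ Finset.range (n + 1), (-x) ^ k * (n.choose k : ℝ)
      = (∑ k ∈ Finset.range n, (-x) ^ (k + 1) * (n.choose (k + 1) : ℝ)) + 1 := by
    rw [Finset.sum_range_succ' (fun k => (-x) ^ k * (n.choose k : ℝ)) n]
    simp
  have hIcc : ∑ k ∈ Finset.Icc 1 n, (n.choose k : ℝ) * (-1 : ℝ) ^ (k - 1) * x ^ k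
      = ∑ k ∈ Finset.range n, (n.choose (k + 1) : ℝ) * (-1 : ℝ) ^ k * x ^ (k + 1) := by
    rw [show Finset.Icc 1 n = Finset.Ico 1 (n + 1) by rw [Finset.Ico_add_one_right_eq_Icc],
      Finset.sum_Ico_eq_sum_range]
    simp [add_comm 1]
  rw [hIcc]
  have : ∀ k, (n.choose (k + 1) : ℝ) * (-1 : ℝ) ^ k * x ^ (k + 1)
      = -((-x) ^ (k + 1) * (n.choose (k + 1) : ℝ)) := by
    intro k
    rw [neg_pow]
    ring
  simp_rw [this]
  rw [Finset.sum_neg_distrib]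
  have := hsplit.symm.trans key
  linarith [this]

/-- Let `F` be a Borel probability measure on `[0,1]` whose moments
`m_j = ∫ t^j dF(t)` satisfy `∑_{j=1}^∞ m_j < ∞`, and let `n ≥ 1`.  Then
`∑_{k=1}^n C(n,k)(−1)^{k−1} ζ_F(k) = ∑_{j=1}^∞ [1 − (1 − m_j)^n]`, where
`ζ_F(k) = ∑_{j=1}^∞ m_j^k` and both series converge absolutely. -/
theorem moment_zeta_binomial_identity
    (μ : Measure ℝ) [IsProbabilityMeasure μ]
    (hsupp : μ (Set.Icc (0 : ℝ) 1)ᶜ = 0)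
    (hsum : Summable (fun j : ℕ => ∫ t, t ^ (j + 1) ∂μ))
    (n : ℕ) (hn : 1 ≤ n) :
    (∀ k : ℕ, 1 ≤ k → k ≤ n → Summable (fun j : ℕ => |(∫ t, t ^ (j + 1) ∂μ) ^ k|)) ∧
    Summable (fun j : ℕ => |1 - (1 - ∫ t, t ^ (j + 1) ∂μ) ^ n|) ∧
    (∑ k ∈ Finset.Icc 1 n,
        (n.choose k : ℝ) * (-1 : ℝ) ^ (k - 1) * ∑' j : ℕ, (∫ t, t ^ (j + 1) ∂μ) ^ k) =
      ∑' j : ℕ, (1 - (1 - ∫ t, t ^ (j + 1) ∂μ) ^ n) := by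
  set m : ℕ → ℝ := fun j => ∫ t, t ^ (j + 1) ∂μ with hmdef
  have hae : ∀ᵐ t ∂μ, t ∈ Set.Icc (0 : ℝ) 1 := by
    rw [ae_iff]
    convert hsupp using 2
    rfl
  have hint : ∀ j : ℕ, Integrable (fun t => t ^ (j + 1)) μ := by
    intro j
    refine (integrable_const (1 : ℝ)).mono' ((continuous_pow (j+1)).aestronglyMeasurable) ?_
    filter_upwards [hae] with t ht
    rw [Real.norm_eq_abs, abs_pow, abs_of_nonneg ht.1]
    exact pow_le_one₀ ht.1 ht.2
  have hm0 : ∀ j, 0 ≤ m j := by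
    intro j
    apply integral_nonneg_of_ae
    filter_upwards [hae] with t ht
    exact pow_nonneg ht.1 _
  have hm1 : ∀ j, m j ≤ 1 := by
    intro j
    have : m j ≤ ∫ _t, (1 : ℝ) ∂μ := by
      apply integral_mono_ae (hint j) (integrable_const 1)
      filter_upwards [hae] with t ht
      exact pow_le_one₀ ht.1 ht.2
    simpa using this
  have S1 : ∀ k : ℕ, 1 ≤ k → Summable (fun j : ℕ => |m j ^ k|) := by
    intro k hk
    apply Summable.of_nonneg_of_le (fun j => abs_nonneg _) _ hsum
    intro j
    rw [abs_of_nonneg (pow_nonneg (hm0 j) _)]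
    calc m j ^ k ≤ m j ^ 1 := pow_le_pow_of_le_one (hm0 j) (hm1 j) hk
    _ = m j := pow_one _
  have S2 : Summable (fun j : ℕ => |1 - (1 - m j) ^ n|) := by
    apply Summable.of_nonneg_of_le (fun j => abs_nonneg _) _ (hsum.mul_left (n : ℝ))
    intro j
    have h1 : (1 - m j) ^ n ≤ 1 := pow_le_one₀ (by linarith [hm1 j]) (by linarith [hm0 j])
    have h2 : 1 - (n : ℝ) * m j ≤ (1 - m j) ^ n := by
      have := one_add_mul_le_pow (a := -(m j)) (by linarith [hm1 j]) n
      simpa [mul_comm, sub_eq_add_neg] using this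
    rw [abs_of_nonneg (by linarith)]
    linarith
  refine ⟨fun k hk _ => S1 k hk, S2, ?_⟩
  have Ssigned : ∀ k ∈ Finset.Icc 1 n,
      Summable (fun j : ℕ => (n.choose k : ℝ) * (-1 : ℝ) ^ (k - 1) * m j ^ k) := by
    intro k hk
    exact ((summable_abs_iff.mp (S1 k (Finset.mem_Icc.mp hk).1)).mul_left _)
  calc ∑ k ∈ Finset.Icc 1 n, (n.choose k : ℝ) * (-1 : ℝ) ^ (k - 1) * ∑' j : ℕ, m j ^ k
      = ∑ k ∈ Finset.Icc 1 n, ∑' j : ℕ, (n.choose k : ℝ) * (-1 : ℝ) ^ (k - 1) * m j ^ k := by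
        refine Finset.sum_congr rfl fun k _ => ?_
        rw [tsum_mul_left]
    _ = ∑' j : ℕ, ∑ k ∈ Finset.Icc 1 n, (n.choose k : ℝ) * (-1 : ℝ) ^ (k - 1) * m j ^ k :=
        (Summable.tsum_finsetSum Ssigned).symm
    _ = ∑' j : ℕ, (1 - (1 - m j) ^ n) := by
        exact tsum_congr fun j => binom_id_aux (m j) n
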